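/- arXiv:1711.06771 — 4 statements merged into one kernel-verified Lean document; each statement's English description precedes it below -/
import Mathlib

section
/- For the fractional repetition code with r columns sampled uniformly without replacement, for every nonnegative integer α: P(err(A) ≤ αs) ≥ 1 − C(k/s, α+1) · C(k−(α+1)s, r) / C(k, r). -/
open scoped Classical


lemma divEq (s b n : ℕ) (hs : 0 < s) : n / s = b ↔ b * s ≤ n ∧ n < b * s + s := by
  constructor
  · rintro rfl
    have h1 := Nat.div_add_mod n s
    have h2 := Nat.mod_lt n hs
    have h3 : s * (n / s) = (n / s) * s := mul_comm _ _
    omega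
  · rintro ⟨h1, h2⟩
    exact Nat.div_eq_of_lt_le (by omega) (by rw [add_mul, one_mul]; omega)

lemma blockCard (k s b : ℕ) (hs : 0 < s) (hdvd : s ∣ k) (hb : b < k / s) :
    (Finset.univ.filter (fun i : Fin k => (i : ℕ) / s = b)).card = s := by
  have hbk : b * s + s ≤ k := by
    have : (b + 1) * s ≤ (k / s) * s := Nat.mul_le_mul_right s hb
    rwa [Nat.div_mul_cancel hdvd, add_mul, one_mul] at this
  have himg : Finset.image Fin.val
      (Finset.univ.filter (fun i : Fin k => (i : ℕ) / s = b))
      = Finset.Ico (b * s) (b * s + s) := by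
    ext n
    simp only [Finset.mem_image, Finset.mem_filter, Finset.mem_univ, true_and, Finset.mem_Ico]
    constructor
    · rintro ⟨i, hi, rfl⟩
      exact (divEq s b i hs).1 hi
    · rintro ⟨h1, h2⟩
      exact ⟨⟨n, by omega⟩, (divEq s b n hs).2 ⟨h1, h2⟩, rfl⟩
  calc (Finset.univ.filter (fun i : Fin k => (i : ℕ) / s = b)).card
      = (Finset.image Fin.val
          (Finset.univ.filter (fun i : Fin k => (i : ℕ) / s = b))).card :=
        (Finset.card_image_of_injective _ Fin.val_injective).symm
    _ = s := by rw [himg, Nat.card_Ico]; omega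


/-- Optimal decoding error: `err(A) = inf_x ‖A x − 1‖₂²`. -/
noncomputable def decErr {m n : Type*} [Fintype m] [Fintype n] (A : Matrix m n ℝ) : ℝ :=
  ⨅ x : n → ℝ, ∑ i, (A.mulVec x i - 1) ^ 2

lemma errLe (k s : ℕ) (hs : 0 < s) (hdvd : s ∣ k) (S : Finset (Fin k)) :
    decErr (fun (i : Fin k) (j : {x : Fin k // x ∈ S}) =>
        if (i : ℕ) / s = (j.1 : ℕ) / s then (1 : ℝ) else 0)
      ≤ s * ((Finset.range (k / s)).filter
        (fun b => ∀ i ∈ S, (i : ℕ) / s ≠ b)).card := by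
  classical
  set A : Matrix (Fin k) {x : Fin k // x ∈ S} ℝ :=
    fun i j => if (i : ℕ) / s = (j.1 : ℕ) / s then (1 : ℝ) else 0 with hA
  set c : Fin k → ℕ :=
    fun i => (S.filter (fun j : Fin k => (j : ℕ) / s = (i : ℕ) / s)).card with hc
  set x : {x : Fin k // x ∈ S} → ℝ := fun j => ((c j.1 : ℝ))⁻¹ with hx
  have hbdd : BddBelow (Set.range fun x : {x : Fin k // x ∈ S} → ℝ =>
      ∑ i, (A.mulVec x i - 1) ^ 2) := by
    refine ⟨0, ?_⟩
    rintro _ ⟨y, rfl⟩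
    positivity
  have hceq : ∀ i j : Fin k, (i : ℕ) / s = (j : ℕ) / s → c j = c i := by
    intro i j h
    simp only [hc]
    rw [h]
  have hmv : ∀ i, A.mulVec x i = (c i : ℝ) * (c i : ℝ)⁻¹ := by
    intro i
    have h1 : A.mulVec x i = ∑ j ∈ S, (if (i : ℕ) / s = (j : ℕ) / s then (c j : ℝ)⁻¹ else 0) := by
      rw [Matrix.mulVec, dotProduct, ← Finset.sum_coe_sort S
        (fun j : Fin k => (if (i : ℕ) / s = (j : ℕ) / s then (c j : ℝ)⁻¹ else 0))]
      apply Finset.sum_congr rfl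
      intro j _
      by_cases h : (i : ℕ) / s = (j.1 : ℕ) / s <;> simp [hA, hx, h]
    have h2 : ∀ j ∈ S, (if (i : ℕ) / s = (j : ℕ) / s then (c j : ℝ)⁻¹ else 0)
        = (if (i : ℕ) / s = (j : ℕ) / s then (c i : ℝ)⁻¹ else 0) := by
      intro j _
      by_cases h : (i : ℕ) / s = (j : ℕ) / s
      · rw [hceq i j h]
      · simp [h]
    have h3 : S.filter (fun j : Fin k => (i : ℕ) / s = (j : ℕ) / s)
        = S.filter (fun j : Fin k => (j : ℕ) / s = (i : ℕ) / s) := by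
      ext m
      simp only [Finset.mem_filter]
      rw [eq_comm]
    rw [h1, Finset.sum_congr rfl h2, ← Finset.sum_filter, Finset.sum_const,
      nsmul_eq_mul, h3]
  have hterm : ∀ i, (A.mulVec x i - 1) ^ 2 = if c i = 0 then 1 else 0 := by
    intro i
    rw [hmv i]
    by_cases h : c i = 0
    · simp [h]
    · rw [mul_inv_cancel₀ (by exact_mod_cast h)]
      simp [h]
  have hsum : ∑ i, (A.mulVec x i - 1) ^ 2
      = ((Finset.univ.filter (fun i : Fin k => c i = 0)).card : ℝ) := by
    simp_rw [hterm]
    rw [Finset.sum_boole]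
  have hcount : (Finset.univ.filter (fun i : Fin k => c i = 0)).card
      = s * ((Finset.range (k / s)).filter (fun b => ∀ i ∈ S, (i : ℕ) / s ≠ b)).card := by
    have hset : Finset.univ.filter (fun i : Fin k => c i = 0)
        = ((Finset.range (k / s)).filter (fun b => ∀ i ∈ S, (i : ℕ) / s ≠ b)).biUnion
            (fun b => Finset.univ.filter (fun i : Fin k => (i : ℕ) / s = b)) := by
      ext i
      simp only [Finset.mem_filter, Finset.mem_univ, true_and, Finset.mem_biUnion,
        Finset.mem_range, hc, Finset.card_eq_zero, Finset.filter_eq_empty_iff]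
      constructor
      · intro h
        exact ⟨(i : ℕ) / s, ⟨Nat.div_lt_div_of_lt_of_dvd hdvd i.2,
          fun j hj => h hj⟩, rfl⟩
      · rintro ⟨b, ⟨_, hb⟩, rfl⟩
        intro j hj
        exact hb j hj
    rw [hset, Finset.card_biUnion]
    · rw [Finset.sum_congr rfl (fun b hb => blockCard k s b hs hdvd
        (Finset.mem_range.1 (Finset.mem_filter.1 hb).1))]
      rw [Finset.sum_const, smul_eq_mul, mul_comm]
    · intro b1 h1 b2 h2 hne
      simp only [Finset.disjoint_left, Finset.mem_filter, Finset.mem_univ, true_and]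
      intro i hi1 hi2
      exact hne (hi1 ▸ hi2 ▸ rfl)
  calc decErr A ≤ ∑ i, (A.mulVec x i - 1) ^ 2 := ciInf_le hbdd x
    _ = _ := by rw [hsum, hcount]; push_cast; ring

theorem stmt6 (k s r α : ℕ) (hs : 0 < s) (hdvd : s ∣ k) (hrk : r ≤ k)
    (G : Matrix (Fin k) (Fin k) ℝ)
    (hG : ∀ i j, G i j = if (i : ℕ) / s = (j : ℕ) / s then 1 else 0) :
    ((Finset.univ.powersetCard r).filter (fun S =>
        decErr (fun (i : Fin k) (j : {x : Fin k // x ∈ S}) => G i j.1) ≤ α * s)).card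
        / (Nat.choose k r : ℝ)
      ≥ 1 - (Nat.choose (k / s) (α + 1) : ℝ) * (Nat.choose (k - (α + 1) * s) r)
          / (Nat.choose k r) := by
  classical
  simp only [hG]
  set eB : Finset (Fin k) → Finset ℕ := fun S =>
    (Finset.range (k / s)).filter (fun b => ∀ i ∈ S, (i : ℕ) / s ≠ b) with heB
  set P : Finset (Finset (Fin k)) := Finset.univ.powersetCard r with hP
  set pred : Finset (Fin k) → Prop := fun S =>
    decErr (fun (i : Fin k) (j : {x : Fin k // x ∈ S}) =>
      if (i : ℕ) / s = (j.1 : ℕ) / s then (1 : ℝ) else 0) ≤ α * s with hpred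
  have hPcard : P.card = k.choose r := by
    rw [hP, Finset.card_powersetCard, Finset.card_univ, Fintype.card_fin]
  -- bad sets have ≥ α+1 empty blocks
  have hbadsub : P.filter (fun S => ¬ pred S) ⊆
      (((Finset.range (k / s)).powersetCard (α + 1)).biUnion
        (fun T => P.filter (fun S => T ⊆ eB S))) := by
    intro S hS
    simp only [Finset.mem_filter] at hS
    obtain ⟨hSP, hSbad⟩ := hS
    have hle := errLe k s hs hdvd S
    have hα : α + 1 ≤ (eB S).card := by
      by_contra hcon
      push_neg at hcon
      apply hSbad
      rw [hpred]
      calc decErr _ ≤ (s : ℝ) * ((eB S).card) := hle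
        _ ≤ (s : ℝ) * α := by
          have : ((eB S).card : ℝ) ≤ α := by exact_mod_cast Nat.lt_succ_iff.1 hcon
          nlinarith [show (0:ℝ) ≤ (s:ℝ) by positivity]
        _ = α * s := by ring
    obtain ⟨T, hTsub, hTcard⟩ := Finset.exists_subset_card_eq hα
    refine Finset.mem_biUnion.2 ⟨T, ?_, ?_⟩
    · rw [Finset.mem_powersetCard]
      exact ⟨hTsub.trans (Finset.filter_subset _ _), hTcard⟩
    · exact Finset.mem_filter.2 ⟨hSP, hTsub⟩
  -- each T contributes at most choose (k - (α+1)s) r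
  have hTbound : ∀ T ∈ (Finset.range (k / s)).powersetCard (α + 1),
      (P.filter (fun S => T ⊆ eB S)).card ≤ (k - (α + 1) * s).choose r := by
    intro T hT
    rw [Finset.mem_powersetCard] at hT
    obtain ⟨hTsub, hTcard⟩ := hT
    set allowed : Finset (Fin k) := Finset.univ.filter (fun i : Fin k => (i : ℕ) / s ∉ T)
      with hall
    have hdis : (Finset.univ.filter (fun i : Fin k => (i : ℕ) / s ∈ T)).card
        = (α + 1) * s := by
      have hset : Finset.univ.filter (fun i : Fin k => (i : ℕ) / s ∈ T)
          = T.biUnion (fun b => Finset.univ.filter (fun i : Fin k => (i : ℕ) / s = b)) := by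
        ext i
        simp only [Finset.mem_filter, Finset.mem_univ, true_and, Finset.mem_biUnion]
        constructor
        · intro h; exact ⟨_, h, rfl⟩
        · rintro ⟨b, hb, rfl⟩; exact hb
      rw [hset, Finset.card_biUnion]
      · rw [Finset.sum_congr rfl (fun b hb => blockCard k s b hs hdvd
          (Finset.mem_range.1 (hTsub hb)))]
        rw [Finset.sum_const, smul_eq_mul, hTcard]
      · intro b1 _ b2 _ hne
        simp only [Finset.disjoint_left, Finset.mem_filter, Finset.mem_univ, true_and]
        intro i hi1 hi2
        exact hne (hi1 ▸ hi2 ▸ rfl)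
    have hallcard : allowed.card = k - (α + 1) * s := by
      have := Finset.card_filter_add_card_filter_not
        (s := (Finset.univ : Finset (Fin k))) (p := fun i : Fin k => (i : ℕ) / s ∈ T)
      rw [Finset.card_univ, Fintype.card_fin, hdis] at this
      have : allowed.card = k - (α + 1) * s := by
        rw [hall]
        omega
      exact this
    have hsub2 : P.filter (fun S => T ⊆ eB S) ⊆ allowed.powersetCard r := by
      intro S hS
      simp only [Finset.mem_filter, hP, Finset.mem_powersetCard] at hS ⊢
      obtain ⟨⟨_, hScard⟩, hTeB⟩ := hS
      refine ⟨?_, hScard⟩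
      intro i hi
      simp only [hall, Finset.mem_filter, Finset.mem_univ, true_and]
      intro hiT
      have := hTeB hiT
      simp only [heB, Finset.mem_filter] at this
      exact this.2 i hi rfl
    calc (P.filter (fun S => T ⊆ eB S)).card ≤ (allowed.powersetCard r).card :=
          Finset.card_le_card hsub2
      _ = (k - (α + 1) * s).choose r := by rw [Finset.card_powersetCard, hallcard]
  have hbad : (P.filter (fun S => ¬ pred S)).card
      ≤ (k / s).choose (α + 1) * (k - (α + 1) * s).choose r := by
    calc (P.filter (fun S => ¬ pred S)).card
        ≤ (((Finset.range (k / s)).powersetCard (α + 1)).biUnion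
            (fun T => P.filter (fun S => T ⊆ eB S))).card := Finset.card_le_card hbadsub
      _ ≤ ∑ T ∈ (Finset.range (k / s)).powersetCard (α + 1),
            (P.filter (fun S => T ⊆ eB S)).card := Finset.card_biUnion_le
      _ ≤ ∑ _T ∈ (Finset.range (k / s)).powersetCard (α + 1),
            (k - (α + 1) * s).choose r := Finset.sum_le_sum hTbound
      _ = (k / s).choose (α + 1) * (k - (α + 1) * s).choose r := by
          rw [Finset.sum_const, smul_eq_mul, Finset.card_powersetCard, Finset.card_range]
  have hgoodbad : (P.filter (fun S => pred S)).card + (P.filter (fun S => ¬ pred S)).card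
      = k.choose r := by
    rw [Finset.card_filter_add_card_filter_not, hPcard]
  have hC : (0 : ℝ) < (k.choose r : ℝ) := by
    exact_mod_cast Nat.choose_pos hrk
  rw [ge_iff_le, sub_le_iff_le_add, ← add_div, le_div_iff₀ hC, one_mul]
  push_cast
  have h1 : ((P.filter (fun S => ¬ pred S)).card : ℝ)
      ≤ ((k / s).choose (α + 1) : ℝ) * ((k - (α + 1) * s).choose r : ℝ) := by
    exact_mod_cast hbad
  have h2 : ((P.filter (fun S => pred S)).card : ℝ)
      + ((P.filter (fun S => ¬ pred S)).card : ℝ) = (k.choose r : ℝ) := by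
    exact_mod_cast hgoodbad
  linarith
end

section
/- Let A ∈ ℝ^{k×r} and ν ≥ ‖A‖₂². Define u₀ = 1_k and u_t = (I − AAᵀ/ν) u_{t−1}. Then for all t, ‖u_t‖₂² ≥ err(A), and lim_{t→∞} ‖u_t‖₂² = err(A), where err(A) = min_x ‖Ax − 1_k‖₂². -/
open Matrix

/-- Spectral (ℓ2 operator) norm of a real matrix. -/
noncomputable def specNorm {m n : Type*} [Fintype m] [Fintype n] (A : Matrix m n ℝ) : ℝ :=
  ⨆ x : {x : n → ℝ // ∑ i, x i ^ 2 ≤ 1}, Real.sqrt (∑ i, (A.mulVec x.1 i) ^ 2)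

set_option maxHeartbeats 2000000 in
theorem stmt11 (k r : ℕ) (A : Matrix (Fin k) (Fin r) ℝ) (ν : ℝ)
    (hν : ν ≥ specNorm A ^ 2)
    (u : ℕ → Fin k → ℝ) (hu0 : u 0 = fun _ => 1)
    (hu : ∀ t, u (t + 1) = u t - ν⁻¹ • (A * Aᵀ).mulVec (u t)) :
    (∀ t, ∑ i, (u t i) ^ 2 ≥ decErr A) ∧
    Filter.Tendsto (fun t => ∑ i, (u t i) ^ 2) Filter.atTop (nhds (decErr A)) := by
  classical
  -- abbreviations
  set E := EuclideanSpace ℝ (Fin k) with hEdef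
  set F := EuclideanSpace ℝ (Fin r) with hFdef
  let e : (Fin k → ℝ) ≃ E := (WithLp.equiv 2 (Fin k → ℝ)).symm
  let f : (Fin r → ℝ) ≃ F := (WithLp.equiv 2 (Fin r → ℝ)).symm
  set L : F →ₗ[ℝ] E := Matrix.toEuclideanLin A with hLdef
  set Lt : E →ₗ[ℝ] F := LinearMap.adjoint L with hLtdef
  have hE : ∀ y : E, ‖y‖ ^ 2 = ∑ i, (y i) ^ 2 := by
    intro y
    rw [EuclideanSpace.norm_eq, Real.sq_sqrt (by positivity)]
    simp [sq_abs]
  have hF : ∀ y : F, ‖y‖ ^ 2 = ∑ i, (y i) ^ 2 := by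
    intro y
    rw [EuclideanSpace.norm_eq, Real.sq_sqrt (by positivity)]
    simp [sq_abs]
  have hLapp : ∀ x : Fin r → ℝ, L (f x) = e (A.mulVec x) := fun x => rfl
  have hnu0 : (0:ℝ) ≤ ν := le_trans (sq_nonneg _) hν
  -- the operator norm bound
  have hLb : ∀ x : F, ‖L x‖ ^ 2 ≤ ν * ‖x‖ ^ 2 := by
    have hspec : ∀ x : F, ‖x‖ ≤ 1 → ‖L x‖ ≤ specNorm A := by
      intro x hx
      have hxm : ∑ i, ((f.symm x) i) ^ 2 ≤ 1 := by
        have : ∑ i, ((f.symm x) i) ^ 2 = ‖x‖ ^ 2 := (hF x).symm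
        rw [this]
        nlinarith [norm_nonneg x]
      have hval : Real.sqrt (∑ i, (A.mulVec (f.symm x) i) ^ 2) = ‖L x‖ := by
        have h1 : ∑ i, (A.mulVec (f.symm x) i) ^ 2 = ‖L x‖ ^ 2 := by
          rw [hE (L x)]; rfl
        rw [h1, Real.sqrt_sq (norm_nonneg _)]
      have hbdd : BddAbove (Set.range fun x : {x : Fin r → ℝ // ∑ i, x i ^ 2 ≤ 1} =>
          Real.sqrt (∑ i, (A.mulVec x.1 i) ^ 2)) := by
        refine ⟨‖LinearMap.toContinuousLinearMap L‖, ?_⟩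
        rintro _ ⟨s, rfl⟩
        have h1 : Real.sqrt (∑ i, (A.mulVec s.1 i) ^ 2) = ‖L (f s.1)‖ := by
          have h2 : ∑ i, (A.mulVec s.1 i) ^ 2 = ‖L (f s.1)‖ ^ 2 := by rw [hE]; rfl
          rw [h2, Real.sqrt_sq (norm_nonneg _)]
        have h3 : ‖f s.1‖ ≤ 1 := by
          have h4 : ‖f s.1‖ ^ 2 ≤ 1 := by
            rw [hF]; exact s.2
          nlinarith [norm_nonneg (f s.1)]
        have h5 : ‖L (f s.1)‖ ≤ ‖LinearMap.toContinuousLinearMap L‖ * ‖f s.1‖ :=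
          (LinearMap.toContinuousLinearMap L).le_opNorm (f s.1)
        show Real.sqrt (∑ i, (A.mulVec s.1 i) ^ 2) ≤ _
        rw [h1]
        calc ‖L (f s.1)‖ ≤ ‖LinearMap.toContinuousLinearMap L‖ * ‖f s.1‖ := h5
          _ ≤ ‖LinearMap.toContinuousLinearMap L‖ * 1 :=
            mul_le_mul_of_nonneg_left h3 (norm_nonneg _)
          _ = _ := mul_one _
      have := le_ciSup hbdd (⟨f.symm x, hxm⟩ :
        {x : Fin r → ℝ // ∑ i, x i ^ 2 ≤ 1})
      rw [hval] at this
      exact this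
    intro x
    rcases eq_or_ne x 0 with rfl | hx0
    · simp
    · have hxpos : (0:ℝ) < ‖x‖ := norm_pos_iff.mpr hx0
      have h1 : ‖L (‖x‖⁻¹ • x)‖ ≤ specNorm A := by
        apply hspec
        rw [norm_smul, norm_inv, norm_norm]
        rw [inv_mul_cancel₀ (ne_of_gt hxpos)]
      have h2 : ‖L (‖x‖⁻¹ • x)‖ = ‖x‖⁻¹ * ‖L x‖ := by
        rw [L.map_smul, norm_smul, norm_inv, norm_norm]
      rw [h2] at h1
      have h3 : ‖L x‖ ≤ specNorm A * ‖x‖ := by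
        rw [inv_mul_le_iff₀ hxpos] at h1
        linarith [h1]
      nlinarith [norm_nonneg (L x), hν, norm_nonneg x]
  -- basic structures
  set K : Submodule ℝ E := LinearMap.ker Lt with hKdef
  set u1 : E := e (fun _ => 1) with hu1def
  set w : E := (Submodule.orthogonalProjection K u1 : E) with hwdef
  set v : E := u1 - w with hvdef
  have hwK : w ∈ K := (Submodule.orthogonalProjection K u1).2
  have hvK : v ∈ Kᗮ := Submodule.sub_starProjection_mem_orthogonal u1
  set S : E →ₗ[ℝ] E := L ∘ₗ Lt with hSdef
  set B : E →ₗ[ℝ] E := LinearMap.id - ν⁻¹ • S with hBdef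
  have hBapp : ∀ y : E, B y = y - ν⁻¹ • S y := fun y => rfl
  have hLtapp : ∀ y : E, Lt y = f (Aᵀ.mulVec (e.symm y)) := by
    intro y
    rw [hLtdef, hLdef, ← Matrix.toEuclideanLin_conjTranspose_eq_adjoint,
      Matrix.conjTranspose_eq_transpose_of_trivial]
    rfl
  have hSapp : ∀ y : E, S y = e ((A * Aᵀ).mulVec (e.symm y)) := by
    intro y
    show L (Lt y) = _
    rw [hLtapp, hLapp, Matrix.mulVec_mulVec]
  -- inner product identities
  have hinnS : ∀ x y : E, @inner ℝ _ _ x (S y) = @inner ℝ _ _ (Lt x) (Lt y) := by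
    intro x y
    have := LinearMap.adjoint_inner_left L (Lt y) x
    rw [hLtdef]
    exact this.symm
  have hSmemKo : ∀ y : E, S y ∈ Kᗮ := by
    intro y
    rw [Submodule.mem_orthogonal]
    intro z hz
    rw [hinnS z y]
    have : Lt z = 0 := hz
    rw [this, inner_zero_left]
  have hBK : ∀ z ∈ K, B z = z := by
    intro z hz
    rw [hBapp]
    have hS : S z = 0 := by
      show L (Lt z) = 0
      have : Lt z = 0 := hz
      rw [this, map_zero]
    rw [hS, smul_zero, sub_zero]
  have hBKo : ∀ y ∈ Kᗮ, B y ∈ Kᗮ := by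
    intro y hy
    rw [hBapp]
    exact Submodule.sub_mem _ hy (Submodule.smul_mem _ _ (hSmemKo y))
  -- K is the orthogonal complement of the range of L
  have hKer : K = (LinearMap.range L)ᗮ := by
    ext z
    rw [Submodule.mem_orthogonal]
    constructor
    · intro hz y hy
      obtain ⟨x, rfl⟩ := hy
      have h1 : @inner ℝ _ _ x (Lt z) = @inner ℝ _ _ (L x) z :=
        LinearMap.adjoint_inner_right L x z
      have h2 : Lt z = 0 := hz
      rw [h2, inner_zero_right] at h1
      exact h1.symm
    · intro hz
      have h1 : @inner ℝ _ _ (Lt z) (Lt z) = @inner ℝ _ _ z (L (Lt z)) :=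
        (LinearMap.adjoint_inner_left L (Lt z) z)
      have h2 : @inner ℝ _ _ z (L (Lt z)) = 0 := by
        rw [real_inner_comm]
        exact hz _ (LinearMap.mem_range_self L (Lt z))
      have : Lt z = 0 := inner_self_eq_zero.mp (h1.trans h2)
      exact this
  have hKorth : Kᗮ = LinearMap.range L := by
    rw [hKer, Submodule.orthogonal_orthogonal]
  have hinner_Ko_K : ∀ a ∈ Kᗮ, ∀ b ∈ K, @inner ℝ _ _ a b = 0 := by
    intro a ha b hb
    rw [real_inner_comm]
    exact (Submodule.mem_orthogonal K a).mp ha b hb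
  -- decErr = ‖w‖²
  have hterm : ∀ x : Fin r → ℝ,
      ∑ i, (A.mulVec x i - 1) ^ 2 = ‖L (f x) - v‖ ^ 2 + ‖w‖ ^ 2 := by
    intro x
    have h1 : ∑ i, (A.mulVec x i - 1) ^ 2 = ‖L (f x) - u1‖ ^ 2 := by
      rw [hE (L (f x) - u1)]; rfl
    have h2 : L (f x) - u1 = (L (f x) - v) - w := by
      rw [hvdef]; abel
    have h3 : @inner ℝ _ _ (L (f x) - v) w = 0 := by
      apply hinner_Ko_K _ _ _ hwK
      exact Submodule.sub_mem _ (hKorth ▸ LinearMap.mem_range_self L (f x)) hvK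
    rw [h1, h2, norm_sub_sq_real, h3]
    ring
  have hbddB : BddBelow (Set.range fun x : Fin r → ℝ => ∑ i, (A.mulVec x i - 1) ^ 2) := by
    refine ⟨0, ?_⟩
    rintro _ ⟨s, rfl⟩
    positivity
  have hdec : decErr A = ‖w‖ ^ 2 := by
    apply le_antisymm
    · obtain ⟨xv, hxv⟩ : v ∈ LinearMap.range L := hKorth ▸ hvK
      have h1 := ciInf_le hbddB (f.symm xv)
      have h2 : ∑ i, (A.mulVec (f.symm xv) i - 1) ^ 2 = ‖w‖ ^ 2 := by
        rw [hterm]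
        have : L (f (f.symm xv)) = v := by rw [Equiv.apply_symm_apply]; exact hxv
        rw [this, sub_self, norm_zero]
        ring
      rw [h2] at h1
      exact h1
    · apply le_ciInf
      intro x
      rw [hterm x]
      nlinarith [sq_nonneg ‖L (f x) - v‖]
  -- the dynamics
  have hUrec : ∀ t, e (u (t + 1)) = B (e (u t)) := by
    intro t
    rw [hu t, hBapp, hSapp]
    have : e.symm (e (u t)) = u t := Equiv.symm_apply_apply _ _
    rw [this]
    rfl
  have hupow : ∀ t, e (u t) = w + (B ^ t) v := by
    intro t
    induction t with
    | zero =>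
      rw [hu0, pow_zero]
      show u1 = w + v
      rw [hvdef]; abel
    | succ n ih =>
      rw [hUrec n, ih, map_add, hBK w hwK, pow_succ']
      rfl
  have hmem : ∀ t, (B ^ t) v ∈ Kᗮ := by
    intro t
    induction t with
    | zero => simpa using hvK
    | succ n ih =>
      rw [pow_succ']
      exact hBKo _ ih
  have hUnorm : ∀ t, ∑ i, (u t i) ^ 2 = ‖w‖ ^ 2 + ‖(B ^ t) v‖ ^ 2 := by
    intro t
    have h1 : ∑ i, (u t i) ^ 2 = ‖e (u t)‖ ^ 2 := by
      rw [hE (e (u t))]; rfl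
    have hinn0 : @inner ℝ _ _ w ((B ^ t) v) = 0 := by
      rw [real_inner_comm]
      exact hinner_Ko_K _ (hmem t) w hwK
    rw [h1, hupow t, norm_add_sq_real, hinn0]
    ring
  refine ⟨?_, ?_⟩
  · intro t
    rw [hdec, hUnorm t]
    nlinarith [sq_nonneg ‖(B ^ t) v‖]
  · have hkey : Filter.Tendsto (fun t => ‖(B ^ t) v‖ ^ 2) Filter.atTop (nhds 0) := by
      rcases eq_or_ne v 0 with hv0 | hv0
      · simp [hv0]
      · -- `ν` must be positive
        have hνpos : 0 < ν := by
          rcases lt_or_eq_of_le hnu0 with h | h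
          · exact h
          · exfalso
            have hL0 : L = 0 := by
              apply LinearMap.ext
              intro x
              have h2 := hLb x
              rw [← h, zero_mul] at h2
              have h3 : ‖L x‖ = 0 := by nlinarith [norm_nonneg (L x)]
              exact norm_eq_zero.mp h3
            have hLt0 : Lt = 0 := by
              rw [hLtdef, hL0]
              simp
            have hK_top : K = ⊤ := by rw [hKdef, hLt0]; exact LinearMap.ker_zero
            have hv00 : v = 0 := by
              have h4 := hvK
              rw [hK_top, Submodule.top_orthogonal_eq_bot] at h4
              simpa using h4
            exact hv0 hv00
        have hνinv : 0 < ν⁻¹ := inv_pos.mpr hνpos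
        have hclosed : IsClosed ((Kᗮ : Submodule ℝ E) : Set E) :=
          Submodule.closed_of_finiteDimensional _
        have hcomp : IsCompact (((Kᗮ : Submodule ℝ E) : Set E) ∩ Metric.sphere 0 1) :=
          (isCompact_sphere (0:E) 1).inter_left hclosed
        have hne : (((Kᗮ : Submodule ℝ E) : Set E) ∩ Metric.sphere 0 1).Nonempty := by
          refine ⟨‖v‖⁻¹ • v, Submodule.smul_mem _ _ hvK, ?_⟩
          rw [mem_sphere_zero_iff_norm, norm_smul, norm_inv, norm_norm,
            inv_mul_cancel₀ (norm_ne_zero_iff.mpr hv0)]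
        have hcont : Continuous fun y : E => ‖Lt y‖ :=
          (LinearMap.continuous_of_finiteDimensional Lt).norm
        obtain ⟨y₀, hy₀mem, hy₀min⟩ := hcomp.exists_isMinOn hne hcont.continuousOn
        obtain ⟨hy₀K, hy₀s⟩ := hy₀mem
        have hy₀norm : ‖y₀‖ = 1 := mem_sphere_zero_iff_norm.mp hy₀s
        set c : ℝ := ‖Lt y₀‖ ^ 2 with hcdef
        have hcpos : 0 < c := by
          have hy0ne : Lt y₀ ≠ 0 := by
            intro h0
            have hyK : y₀ ∈ K := h0
            have hy00 : y₀ = 0 := inner_self_eq_zero.mp (hinner_Ko_K y₀ hy₀K y₀ hyK)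
            rw [hy00, norm_zero] at hy₀norm
            norm_num at hy₀norm
          have : 0 < ‖Lt y₀‖ := norm_pos_iff.mpr hy0ne
          positivity
        have hc : ∀ x ∈ Kᗮ, c * ‖x‖ ^ 2 ≤ ‖Lt x‖ ^ 2 := by
          intro x hx
          rcases eq_or_ne x 0 with rfl | hx0
          · simp
          · have hxpos : 0 < ‖x‖ := norm_pos_iff.mpr hx0
            have hmem' : ‖x‖⁻¹ • x ∈ ((Kᗮ : Submodule ℝ E) : Set E) ∩ Metric.sphere 0 1 := by
              refine ⟨Submodule.smul_mem _ _ hx, ?_⟩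
              rw [mem_sphere_zero_iff_norm, norm_smul, norm_inv, norm_norm,
                inv_mul_cancel₀ (ne_of_gt hxpos)]
            have h1 : ‖Lt y₀‖ ≤ ‖Lt (‖x‖⁻¹ • x)‖ := hy₀min hmem'
            rw [Lt.map_smul, norm_smul, norm_inv, norm_norm,
              le_inv_mul_iff₀ hxpos] at h1
            rw [hcdef]
            nlinarith [norm_nonneg (Lt y₀), norm_nonneg (Lt x), hxpos, h1,
              mul_nonneg (norm_nonneg x) (norm_nonneg (Lt y₀))]
        set ρ : ℝ := 1 - ν⁻¹ * c with hρdef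
        have hcontr : ∀ x ∈ Kᗮ, ‖B x‖ ^ 2 ≤ ρ * ‖x‖ ^ 2 := by
          intro x hx
          have hnormB : ‖B x‖ ^ 2
              = ‖x‖ ^ 2 - 2 * (ν⁻¹ * ‖Lt x‖ ^ 2) + (ν⁻¹) ^ 2 * ‖S x‖ ^ 2 := by
            rw [hBapp, norm_sub_sq_real, real_inner_smul_right, hinnS x x,
              real_inner_self_eq_norm_sq, norm_smul, norm_inv, Real.norm_eq_abs,
              abs_of_pos hνpos]
            ring
          have hSx : ‖S x‖ ^ 2 ≤ ν * ‖Lt x‖ ^ 2 := hLb (Lt x)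
          have hcx := hc x hx
          have hinv : ν⁻¹ * ν = 1 := inv_mul_cancel₀ (ne_of_gt hνpos)
          have h5 : (ν⁻¹) ^ 2 * ‖S x‖ ^ 2 ≤ ν⁻¹ * ‖Lt x‖ ^ 2 := by
            have h6 := mul_le_mul_of_nonneg_left hSx (sq_nonneg ν⁻¹)
            calc (ν⁻¹) ^ 2 * ‖S x‖ ^ 2 ≤ (ν⁻¹) ^ 2 * (ν * ‖Lt x‖ ^ 2) := h6
              _ = (ν⁻¹ * ν) * (ν⁻¹ * ‖Lt x‖ ^ 2) := by ring
              _ = ν⁻¹ * ‖Lt x‖ ^ 2 := by rw [hinv, one_mul]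
          have h7 : ν⁻¹ * (c * ‖x‖ ^ 2) ≤ ν⁻¹ * ‖Lt x‖ ^ 2 :=
            mul_le_mul_of_nonneg_left hcx hνinv.le
          rw [hnormB, hρdef]
          nlinarith [h5, h7]
        have hρ0 : 0 ≤ ρ := by
          have h8 := hcontr y₀ hy₀K
          rw [hy₀norm] at h8
          nlinarith [sq_nonneg ‖B y₀‖, h8]
        have hρ1 : ρ < 1 := by
          have : 0 < ν⁻¹ * c := mul_pos hνinv hcpos
          rw [hρdef]
          linarith
        have hgeo : ∀ t, ‖(B ^ t) v‖ ^ 2 ≤ ρ ^ t * ‖v‖ ^ 2 := by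
          intro t
          induction t with
          | zero => simp
          | succ n ih =>
            have h1 : ‖(B ^ (n + 1)) v‖ ^ 2 = ‖B ((B ^ n) v)‖ ^ 2 := by
              have h2 : (B ^ (n + 1)) v = B ((B ^ n) v) := by
                rw [pow_succ']
                rfl
              rw [h2]
            calc ‖(B ^ (n + 1)) v‖ ^ 2 = ‖B ((B ^ n) v)‖ ^ 2 := h1
              _ ≤ ρ * ‖(B ^ n) v‖ ^ 2 := hcontr _ (hmem n)
              _ ≤ ρ * (ρ ^ n * ‖v‖ ^ 2) := mul_le_mul_of_nonneg_left ih hρ0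
              _ = ρ ^ (n + 1) * ‖v‖ ^ 2 := by ring
        have h0 : Filter.Tendsto (fun t => ρ ^ t * ‖v‖ ^ 2) Filter.atTop (nhds 0) := by
          have h9 := (tendsto_pow_atTop_nhds_zero_of_lt_one hρ0 hρ1).mul_const (‖v‖ ^ 2)
          simpa using h9
        exact squeeze_zero (fun t => sq_nonneg _) hgeo h0
    have := hkey.const_add (‖w‖ ^ 2)
    rw [add_zero] at this
    have heq : (fun t => ∑ i, (u t i) ^ 2) = fun t => ‖w‖ ^ 2 + ‖(B ^ t) v‖ ^ 2 :=
      funext hUnorm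
    rw [heq, hdec]
    exact this
end

section
/- Let A ∈ ℝ^{k×r} and ν ≥ ‖A‖₂² with ν > 0. If u lies in the column span of A, then ‖(I − AAᵀ/ν) u‖₂ ≤ (1 − σ_min(A)²/ν) ‖u‖₂, where σ_min(A) is the smallest nonzero singular value of A restricted appropriately (the smallest singular value associated to the column span). -/
open Matrix

/-- The smallest positive singular value of `A`: the infimum of `‖A x‖₂` over unit
vectors `x` in the row space of `A` (the orthogonal complement of the kernel). -/
noncomputable def sminPos {m n : Type*} [Fintype m] [Fintype n] (A : Matrix m n ℝ) : ℝ :=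
  sInf {c : ℝ | ∃ x : n → ℝ, (∃ y : m → ℝ, x = Aᵀ.mulVec y) ∧ (∑ i, x i ^ 2 = 1) ∧
    c = Real.sqrt (∑ i, (A.mulVec x i) ^ 2)}

namespace Stmt12Aux

lemma dot_sq_le {n : ℕ} (x y : Fin n → ℝ) : (x ⬝ᵥ y)^2 ≤ (x ⬝ᵥ x) * (y ⬝ᵥ y) := by
  have := Finset.sum_mul_sq_le_sq_mul_sq Finset.univ x y
  simpa [dotProduct, sq] using this

lemma dot_self_nonneg {n : ℕ} (x : Fin n → ℝ) : 0 ≤ x ⬝ᵥ x :=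
  Finset.sum_nonneg fun i _ => mul_self_nonneg _

lemma sum_sq_eq {n : ℕ} (v : Fin n → ℝ) : ∑ i, v i ^ 2 = v ⬝ᵥ v := by
  simp [dotProduct, sq]

lemma eq_zero_of_dot_self {n : ℕ} {x : Fin n → ℝ} (h : x ⬝ᵥ x = 0) : x = 0 := by
  funext i
  have h2 := (Finset.sum_eq_zero_iff_of_nonneg (fun i _ => mul_self_nonneg (x i))).1 h i
    (Finset.mem_univ i)
  simpa using mul_self_eq_zero.1 h2

variable {k r : ℕ} (A : Matrix (Fin k) (Fin r) ℝ)

lemma spec_bdd : BddAbove (Set.range fun x : {x : Fin r → ℝ // ∑ i, x i ^ 2 ≤ 1} =>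
    Real.sqrt (∑ i, (A.mulVec x.1 i) ^ 2)) := by
  refine ⟨Real.sqrt (∑ i, ∑ j, A i j ^ 2), ?_⟩
  rintro c ⟨⟨x, hx⟩, rfl⟩
  apply Real.sqrt_le_sqrt
  calc ∑ i, (A.mulVec x i) ^ 2 ≤ ∑ i, (∑ j, A i j ^ 2) * (∑ j, x j ^ 2) := by
        refine Finset.sum_le_sum fun i _ => ?_
        simpa [Matrix.mulVec, dotProduct] using
          Finset.sum_mul_sq_le_sq_mul_sq Finset.univ (fun j => A i j) x
    _ ≤ ∑ i, (∑ j, A i j ^ 2) * 1 := Finset.sum_le_sum fun i _ =>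
        mul_le_mul_of_nonneg_left hx (Finset.sum_nonneg fun j _ => sq_nonneg _)
    _ = ∑ i, ∑ j, A i j ^ 2 := by simp

lemma spec_nonneg : 0 ≤ specNorm A := Real.iSup_nonneg fun _ => Real.sqrt_nonneg _

lemma spec_unit {x : Fin r → ℝ} (hx : ∑ i, x i ^ 2 ≤ 1) :
    Real.sqrt (∑ i, (A.mulVec x i) ^ 2) ≤ specNorm A :=
  le_ciSup (spec_bdd A) (⟨x, hx⟩ : {x : Fin r → ℝ // ∑ i, x i ^ 2 ≤ 1})

lemma specA_bound (x : Fin r → ℝ) :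
    (A *ᵥ x) ⬝ᵥ (A *ᵥ x) ≤ specNorm A ^ 2 * (x ⬝ᵥ x) := by
  rcases eq_or_lt_of_le (dot_self_nonneg x) with h | h
  · have hx0 : x = 0 := eq_zero_of_dot_self h.symm
    simp [hx0]
  · set s := Real.sqrt (x ⬝ᵥ x) with hs
    have hs0 : 0 < s := Real.sqrt_pos.2 h
    have hss : s ^ 2 = x ⬝ᵥ x := Real.sq_sqrt (le_of_lt h)
    have hxu : ∑ i, (s⁻¹ • x) i ^ 2 ≤ 1 := by
      have h1 : ∑ i, (s⁻¹ • x) i ^ 2 = s⁻¹ ^ 2 * ∑ i, x i ^ 2 := by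
        simp [mul_pow, Finset.mul_sum]
      rw [h1, sum_sq_eq, ← hss]
      field_simp
      exact le_refl 1
    have h2 := spec_unit A hxu
    have h3 : A *ᵥ (s⁻¹ • x) = s⁻¹ • (A *ᵥ x) := by
      rw [Matrix.mulVec_smul]
    have h4 : ∑ i, (A *ᵥ (s⁻¹ • x)) i ^ 2 = s⁻¹ ^ 2 * ((A *ᵥ x) ⬝ᵥ (A *ᵥ x)) := by
      rw [h3, ← sum_sq_eq]
      simp [mul_pow, Finset.mul_sum]
    have h5 : s⁻¹ ^ 2 * ((A *ᵥ x) ⬝ᵥ (A *ᵥ x)) ≤ specNorm A ^ 2 := by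
      have hnn : (0:ℝ) ≤ s⁻¹ ^ 2 * ((A *ᵥ x) ⬝ᵥ (A *ᵥ x)) :=
        mul_nonneg (sq_nonneg _) (dot_self_nonneg _)
      calc s⁻¹ ^ 2 * ((A *ᵥ x) ⬝ᵥ (A *ᵥ x))
          = Real.sqrt (∑ i, (A *ᵥ (s⁻¹ • x)) i ^ 2) ^ 2 := by
            rw [Real.sq_sqrt (h4 ▸ hnn), h4]
        _ ≤ specNorm A ^ 2 := pow_le_pow_left₀ (Real.sqrt_nonneg _) h2 2
    have hpos : (0:ℝ) < s ^ 2 := by positivity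
    have h7 := mul_le_mul_of_nonneg_right h5 hpos.le
    have h8 : s⁻¹ ^ 2 * ((A *ᵥ x) ⬝ᵥ (A *ᵥ x)) * s ^ 2 = (A *ᵥ x) ⬝ᵥ (A *ᵥ x) := by
      field_simp
    rw [h8, hss] at h7
    exact h7

lemma specAT_bound (w : Fin k → ℝ) :
    (Aᵀ *ᵥ w) ⬝ᵥ (Aᵀ *ᵥ w) ≤ specNorm A ^ 2 * (w ⬝ᵥ w) := by
  set z := Aᵀ *ᵥ w with hzdef
  have hz : z ⬝ᵥ z = (A *ᵥ z) ⬝ᵥ w := by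
    rw [hzdef, dotProduct_mulVec, vecMul_transpose]
  rcases eq_or_lt_of_le (dot_self_nonneg z) with h | h
  · rw [← h]
    exact mul_nonneg (sq_nonneg _) (dot_self_nonneg _)
  · have h1 : (z ⬝ᵥ z) ^ 2 ≤ ((A *ᵥ z) ⬝ᵥ (A *ᵥ z)) * (w ⬝ᵥ w) := by
      rw [hz]
      exact dot_sq_le _ _
    have h2 := specA_bound A z
    have h3 := dot_self_nonneg w
    nlinarith [h, h1, h2, h3]

lemma smin_bddBelow : BddBelow {c : ℝ | ∃ x : Fin r → ℝ, (∃ y : Fin k → ℝ, x = Aᵀ.mulVec y) ∧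
    (∑ i, x i ^ 2 = 1) ∧ c = Real.sqrt (∑ i, (A.mulVec x i) ^ 2)} := by
  refine ⟨0, ?_⟩
  rintro c ⟨x, -, -, rfl⟩
  exact Real.sqrt_nonneg _

lemma smin_nonneg : 0 ≤ sminPos A := by
  apply Real.sInf_nonneg
  rintro c ⟨x, -, -, rfl⟩
  exact Real.sqrt_nonneg _

lemma smin_bound (x : Fin r → ℝ) (hx : ∃ y : Fin k → ℝ, x = Aᵀ *ᵥ y) :
    sminPos A ^ 2 * (x ⬝ᵥ x) ≤ (A *ᵥ x) ⬝ᵥ (A *ᵥ x) := by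
  rcases eq_or_lt_of_le (dot_self_nonneg x) with h | h
  · rw [← h, mul_zero]
    exact dot_self_nonneg _
  · obtain ⟨y, hy⟩ := hx
    set s := Real.sqrt (x ⬝ᵥ x) with hs
    have hs0 : 0 < s := Real.sqrt_pos.2 h
    have hss : s ^ 2 = x ⬝ᵥ x := Real.sq_sqrt (le_of_lt h)
    have hxu : ∑ i, (s⁻¹ • x) i ^ 2 = 1 := by
      have h1 : ∑ i, (s⁻¹ • x) i ^ 2 = s⁻¹ ^ 2 * ∑ i, x i ^ 2 := by
        simp [mul_pow, Finset.mul_sum]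
      rw [h1, sum_sq_eq, ← hss]
      field_simp
    have hmem : Real.sqrt (∑ i, (A *ᵥ (s⁻¹ • x)) i ^ 2) ∈
        {c : ℝ | ∃ x : Fin r → ℝ, (∃ y : Fin k → ℝ, x = Aᵀ.mulVec y) ∧
          (∑ i, x i ^ 2 = 1) ∧ c = Real.sqrt (∑ i, (A.mulVec x i) ^ 2)} := by
      refine ⟨s⁻¹ • x, ⟨s⁻¹ • y, ?_⟩, hxu, rfl⟩
      rw [hy, Matrix.mulVec_smul]
    have hle : sminPos A ≤ Real.sqrt (∑ i, (A *ᵥ (s⁻¹ • x)) i ^ 2) :=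
      csInf_le (smin_bddBelow A) hmem
    have h4 : ∑ i, (A *ᵥ (s⁻¹ • x)) i ^ 2 = s⁻¹ ^ 2 * ((A *ᵥ x) ⬝ᵥ (A *ᵥ x)) := by
      rw [Matrix.mulVec_smul, ← sum_sq_eq]
      simp [mul_pow, Finset.mul_sum]
    have h5 : sminPos A ^ 2 ≤ s⁻¹ ^ 2 * ((A *ᵥ x) ⬝ᵥ (A *ᵥ x)) := by
      have hnn : (0:ℝ) ≤ s⁻¹ ^ 2 * ((A *ᵥ x) ⬝ᵥ (A *ᵥ x)) :=
        mul_nonneg (sq_nonneg _) (dot_self_nonneg _)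
      calc sminPos A ^ 2 ≤ Real.sqrt (∑ i, (A *ᵥ (s⁻¹ • x)) i ^ 2) ^ 2 :=
            pow_le_pow_left₀ (smin_nonneg A) hle 2
        _ = s⁻¹ ^ 2 * ((A *ᵥ x) ⬝ᵥ (A *ᵥ x)) := by rw [Real.sq_sqrt (h4 ▸ hnn), h4]
    have h7 := mul_le_mul_of_nonneg_right h5 (le_of_lt h)
    have h8 : s⁻¹ ^ 2 * ((A *ᵥ x) ⬝ᵥ (A *ᵥ x)) * (x ⬝ᵥ x) = (A *ᵥ x) ⬝ᵥ (A *ᵥ x) := by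
      rw [← hss]
      field_simp
    rw [h8] at h7
    linarith [h7]

lemma smin_sq_le {ν : ℝ} (hν : ν ≥ specNorm A ^ 2) (hν0 : 0 < ν) : sminPos A ^ 2 ≤ ν := by
  set S := {c : ℝ | ∃ x : Fin r → ℝ, (∃ y : Fin k → ℝ, x = Aᵀ.mulVec y) ∧
    (∑ i, x i ^ 2 = 1) ∧ c = Real.sqrt (∑ i, (A.mulVec x i) ^ 2)} with hS
  by_cases hne : S.Nonempty
  · obtain ⟨c, hc⟩ := hne
    obtain ⟨x, hxr, hx1, rfl⟩ := hc
    have hle : sminPos A ≤ Real.sqrt (∑ i, (A.mulVec x i) ^ 2) :=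
      csInf_le (smin_bddBelow A) ⟨x, hxr, hx1, rfl⟩
    have h2 : ∑ i, (A.mulVec x i) ^ 2 ≤ ν := by
      have := specA_bound A x
      rw [sum_sq_eq]
      have hx1' : x ⬝ᵥ x = 1 := by rw [← sum_sq_eq]; exact hx1
      nlinarith [this, hx1', hν]
    have h3 : Real.sqrt (∑ i, (A.mulVec x i) ^ 2) ≤ Real.sqrt ν := Real.sqrt_le_sqrt h2
    have h4 : sminPos A ≤ Real.sqrt ν := le_trans hle h3
    calc sminPos A ^ 2 ≤ Real.sqrt ν ^ 2 := pow_le_pow_left₀ (smin_nonneg A) h4 2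
      _ = ν := Real.sq_sqrt hν0.le
  · have hempty : S = ∅ := Set.not_nonempty_iff_eq_empty.1 hne
    have : sminPos A = 0 := by
      rw [sminPos, ← hS, hempty, Real.sInf_empty]
    rw [this]
    simpa using hν0.le

lemma range_decomp (u : Fin k → ℝ) (hu : ∃ y : Fin r → ℝ, u = A *ᵥ y) :
    ∃ x : Fin r → ℝ, (∃ y : Fin k → ℝ, x = Aᵀ *ᵥ y) ∧ u = A *ᵥ x := by
  obtain ⟨y, rfl⟩ := hu
  let e := WithLp.linearEquiv 2 ℝ (Fin r → ℝ)
  let L : (Fin k → ℝ) →ₗ[ℝ] EuclideanSpace ℝ (Fin r) := e.symm.toLinearMap.comp Aᵀ.mulVecLin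
  let W : Submodule ℝ (EuclideanSpace ℝ (Fin r)) := LinearMap.range L
  obtain ⟨a, ha, b, hb, hab⟩ := W.exists_add_mem_mem_orthogonal (e.symm y)
  obtain ⟨w, hw⟩ := ha
  refine ⟨e a, ⟨w, ?_⟩, ?_⟩
  · rw [← hw]; simp [L, e]; exact (mulVec_transpose A w).symm
  · have hy : y = e a + e b := by
      have := congrArg e hab
      simpa [map_add] using this
    have hmem : L (A *ᵥ (e b)) ∈ W := ⟨A *ᵥ (e b), rfl⟩
    have hinner : (inner ℝ (L (A *ᵥ (e b))) b : ℝ) = 0 := hb _ hmem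
    have hdot : (Aᵀ *ᵥ (A *ᵥ (e b))) ⬝ᵥ (e b) = 0 := by
      rw [← hinner]
      rw [PiLp.inner_apply]
      simp [L, e, RCLike.inner_apply, dotProduct,
        Matrix.mulVec_mulVec, Matrix.vecMul_transpose,
        Matrix.mulVec_transpose]
      rw [← Matrix.mulVec_transpose A, Matrix.mulVec_mulVec]
      exact Finset.sum_congr rfl fun i _ => mul_comm _ _
    have hAb : A *ᵥ (e b) = 0 := by
      apply eq_zero_of_dot_self
      calc (A *ᵥ (e b)) ⬝ᵥ (A *ᵥ (e b)) = (Aᵀ *ᵥ (A *ᵥ (e b))) ⬝ᵥ (e b) := by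
            rw [dotProduct_mulVec, mulVec_transpose]
        _ = 0 := hdot
    rw [hy, Matrix.mulVec_add, hAb, add_zero]

lemma key_bound (u : Fin k → ℝ) (hu : ∃ y : Fin r → ℝ, u = A *ᵥ y) :
    sminPos A ^ 2 * (u ⬝ᵥ u) ≤ (Aᵀ *ᵥ u) ⬝ᵥ (Aᵀ *ᵥ u) := by
  obtain ⟨x, hxr, rfl⟩ := range_decomp A u hu
  have h1 : (A *ᵥ x) ⬝ᵥ (A *ᵥ x) = (Aᵀ *ᵥ (A *ᵥ x)) ⬝ᵥ x := by
    rw [dotProduct_mulVec, mulVec_transpose]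
  have h2 : ((Aᵀ *ᵥ (A *ᵥ x)) ⬝ᵥ x) ^ 2 ≤
      ((Aᵀ *ᵥ (A *ᵥ x)) ⬝ᵥ (Aᵀ *ᵥ (A *ᵥ x))) * (x ⬝ᵥ x) := dot_sq_le _ _
  have h3 := smin_bound A x hxr
  rcases eq_or_lt_of_le (dot_self_nonneg (A *ᵥ x)) with h | h
  · rw [← h, mul_zero]
    exact dot_self_nonneg _
  · have h2' : ((A *ᵥ x) ⬝ᵥ (A *ᵥ x)) ^ 2 ≤
        ((Aᵀ *ᵥ (A *ᵥ x)) ⬝ᵥ (Aᵀ *ᵥ (A *ᵥ x))) * (x ⬝ᵥ x) := by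
      rw [h1]; exact h2
    have ha := mul_le_mul_of_nonneg_left h2' (sq_nonneg (sminPos A))
    have hb := mul_le_mul_of_nonneg_left h3 (dot_self_nonneg (Aᵀ *ᵥ (A *ᵥ x)))
    have h4 : sminPos A ^ 2 * ((A *ᵥ x) ⬝ᵥ (A *ᵥ x)) * ((A *ᵥ x) ⬝ᵥ (A *ᵥ x)) ≤
        ((Aᵀ *ᵥ (A *ᵥ x)) ⬝ᵥ (Aᵀ *ᵥ (A *ᵥ x))) * ((A *ᵥ x) ⬝ᵥ (A *ᵥ x)) := by
      nlinarith [ha, hb, h]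
    exact le_of_mul_le_mul_right h4 h

end Stmt12Aux

open Stmt12Aux

theorem stmt12 (k r : ℕ) (A : Matrix (Fin k) (Fin r) ℝ) (ν : ℝ)
    (hν : ν ≥ specNorm A ^ 2) (hν0 : 0 < ν)
    (u : Fin k → ℝ) (hu : ∃ y : Fin r → ℝ, u = A.mulVec y) :
    Real.sqrt (∑ i, ((u - ν⁻¹ • (A * Aᵀ).mulVec u) i) ^ 2)
      ≤ (1 - sminPos A ^ 2 / ν) * Real.sqrt (∑ i, (u i) ^ 2) := by
  set c : ℝ := 1 - sminPos A ^ 2 / ν with hc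
  have hsm : sminPos A ^ 2 ≤ ν := smin_sq_le A hν hν0
  have hc0 : 0 ≤ c := by
    rw [hc, sub_nonneg, div_le_one hν0]
    exact hsm
  set g : (Fin k → ℝ) → (Fin k → ℝ) → ℝ :=
    fun v w => v ⬝ᵥ (w - ν⁻¹ • ((A * Aᵀ) *ᵥ w)) with hg
  have hx : ∀ v w : Fin k → ℝ, v ⬝ᵥ ((A * Aᵀ) *ᵥ w) = (Aᵀ *ᵥ v) ⬝ᵥ (Aᵀ *ᵥ w) := by
    intro v w
    rw [← Matrix.mulVec_mulVec, dotProduct_mulVec, ← Matrix.mulVec_transpose]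
  have hgform : ∀ v w, g v w = v ⬝ᵥ w - ν⁻¹ * ((Aᵀ *ᵥ v) ⬝ᵥ (Aᵀ *ᵥ w)) := by
    intro v w
    rw [hg]
    simp only [dotProduct_sub, dotProduct_smul, smul_eq_mul]
    rw [hx v w]
  have hsymm : ∀ v w, g v w = g w v := by
    intro v w
    rw [hgform, hgform, dotProduct_comm v w, dotProduct_comm (Aᵀ *ᵥ v) (Aᵀ *ᵥ w)]
  have hpsd : ∀ v, 0 ≤ g v v := by
    intro v
    rw [hgform]
    have h1 : (Aᵀ *ᵥ v) ⬝ᵥ (Aᵀ *ᵥ v) ≤ ν * (v ⬝ᵥ v) :=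
      le_trans (specAT_bound A v) (mul_le_mul_of_nonneg_right hν (dot_self_nonneg v))
    have h2 := mul_le_mul_of_nonneg_left h1 (inv_nonneg.2 hν0.le)
    have h3 : ν⁻¹ * (ν * (v ⬝ᵥ v)) = v ⬝ᵥ v := by field_simp
    linarith [h2, h3 ▸ h2]
  have hQ : ∀ v, (∃ y : Fin r → ℝ, v = A *ᵥ y) → g v v ≤ c * (v ⬝ᵥ v) := by
    intro v hv
    rw [hgform]
    have h1 := key_bound A v hv
    have h2 := mul_le_mul_of_nonneg_left h1 (inv_nonneg.2 hν0.le)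
    have h3 : c * (v ⬝ᵥ v) = v ⬝ᵥ v - ν⁻¹ * (sminPos A ^ 2 * (v ⬝ᵥ v)) := by
      rw [hc]
      field_simp
    linarith [h2, h3]
  have hCS : ∀ v w, (g v w) ^ 2 ≤ g v v * g w w := by
    intro v w
    have hquad : ∀ t : ℝ, 0 ≤ g w w * (t * t) + (2 * g v w) * t + g v v := by
      intro t
      have h0 := hpsd (v + t • w)
      have hexp : g (v + t • w) (v + t • w) =
          g w w * (t * t) + (2 * g v w) * t + g v v := by
        rw [hgform, hgform, hgform, hgform]
        simp only [add_dotProduct, dotProduct_add, smul_dotProduct, dotProduct_smul,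
          Matrix.mulVec_add, Matrix.mulVec_smul, smul_eq_mul]
        rw [dotProduct_comm w v, dotProduct_comm (Aᵀ *ᵥ w) (Aᵀ *ᵥ v)]
        ring
      rw [hexp] at h0
      exact h0
    have hdisc := discrim_le_zero hquad
    rw [discrim] at hdisc
    nlinarith [hdisc]
  obtain ⟨y, hy⟩ := hu
  set Su : Fin k → ℝ := u - ν⁻¹ • ((A * Aᵀ) *ᵥ u) with hSu
  have hSurange : ∃ y' : Fin r → ℝ, Su = A *ᵥ y' := by
    refine ⟨y - ν⁻¹ • (Aᵀ *ᵥ u), ?_⟩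
    rw [hSu, Matrix.mulVec_sub, Matrix.mulVec_smul, Matrix.mulVec_mulVec, ← hy]
  have h1 : g u u ≤ c * (u ⬝ᵥ u) := hQ u ⟨y, hy⟩
  have h2 : g Su Su ≤ c * (Su ⬝ᵥ Su) := hQ Su hSurange
  have h4 : g Su u = Su ⬝ᵥ Su := rfl
  have h5 : g u Su = Su ⬝ᵥ Su := by rw [hsymm u Su, h4]
  have h6 : (Su ⬝ᵥ Su) ^ 2 ≤ (c * (u ⬝ᵥ u)) * (c * (Su ⬝ᵥ Su)) := by
    have h6' := le_trans (hCS u Su) (mul_le_mul h1 h2 (hpsd Su) (le_trans (hpsd u) h1))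
    rw [h5] at h6'
    exact h6'
  have h7 : Su ⬝ᵥ Su ≤ c ^ 2 * (u ⬝ᵥ u) := by
    rcases eq_or_lt_of_le (dot_self_nonneg Su) with h | h
    · rw [← h]
      exact mul_nonneg (sq_nonneg _) (dot_self_nonneg _)
    · have h8 : (Su ⬝ᵥ Su) * (Su ⬝ᵥ Su) ≤ (c ^ 2 * (u ⬝ᵥ u)) * (Su ⬝ᵥ Su) := by
        nlinarith [h6]
      exact le_of_mul_le_mul_right h8 h
  calc Real.sqrt (∑ i, ((u - ν⁻¹ • (A * Aᵀ).mulVec u) i) ^ 2)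
      = Real.sqrt (Su ⬝ᵥ Su) := by rw [sum_sq_eq]
    _ ≤ Real.sqrt (c ^ 2 * (u ⬝ᵥ u)) := Real.sqrt_le_sqrt h7
    _ = c * Real.sqrt (u ⬝ᵥ u) := by
        rw [Real.sqrt_mul (sq_nonneg c), Real.sqrt_sq hc0]
    _ = c * Real.sqrt (∑ i, (u i) ^ 2) := by rw [sum_sq_eq]
end

section
/- For the fractional repetition code G_frac (k×k block-diagonal with k/s all-ones blocks, s ∣ k, s ∣ r), the worst case over all choices of r non-straggler columns of the optimal decoding error is exactly k − r; i.e., max over k×r column-submatrices A of G_frac of err(A) = k − r, attained by choosing all non-stragglers from r/s complete blocks. -/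
theorem stmt19 (k s r : ℕ) (hs : 0 < s) (hdk : s ∣ k) (hdr : s ∣ r) (hrk : r ≤ k)
    (G : Matrix (Fin k) (Fin k) ℝ)
    (hG : ∀ i j, G i j = if (i : ℕ) / s = (j : ℕ) / s then 1 else 0) :
    (∀ S ∈ (Finset.univ : Finset (Fin k)).powersetCard r,
        decErr (fun (i : Fin k) (j : {x : Fin k // x ∈ S}) => G i j.1) ≤ (k : ℝ) - r) ∧
    (∃ S ∈ (Finset.univ : Finset (Fin k)).powersetCard r,
        decErr (fun (i : Fin k) (j : {x : Fin k // x ∈ S}) => G i j.1) = (k : ℝ) - r) := by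
  have hub : ∀ S ∈ (Finset.univ : Finset (Fin k)).powersetCard r,
      decErr (fun (i : Fin k) (j : {x : Fin k // x ∈ S}) => G i j.1) ≤ (k : ℝ) - r := by
    intro S hS
    have hcard : S.card = r := (Finset.mem_powersetCard.mp hS).2
    set A : Matrix (Fin k) {x : Fin k // x ∈ S} ℝ := fun i j => G i j.1 with hA
    set c : Fin k → ℕ :=
      fun i => (S.filter (fun j : Fin k => (i : ℕ) / s = (j : ℕ) / s)).card with hc
    set x₀ : {x : Fin k // x ∈ S} → ℝ := fun j => ((c j.1 : ℝ))⁻¹ with hx₀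
    have hmul : ∀ i, A.mulVec x₀ i = if c i = 0 then 0 else 1 := by
      intro i
      have h1 : A.mulVec x₀ i = ∑ j ∈ S,
          (if ((i : ℕ) / s = (j : ℕ) / s) then ((c j : ℝ))⁻¹ else 0) := by
        rw [show A.mulVec x₀ i = ∑ j : {x : Fin k // x ∈ S},
            (if ((i : ℕ) / s = (j.1 : ℕ) / s) then ((c j.1 : ℝ))⁻¹ else 0) from ?_]
        · exact Finset.sum_coe_sort S
            (fun j => (if ((i : ℕ) / s = (j : ℕ) / s) then ((c j : ℝ))⁻¹ else 0))
        · simp only [Matrix.mulVec, dotProduct, hA, hx₀]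
          refine Finset.sum_congr rfl (fun j _ => ?_)
          rw [hG]
          split <;> simp
      rw [h1, ← Finset.sum_filter]
      have hcj : ∀ j ∈ S.filter (fun j : Fin k => (i : ℕ) / s = (j : ℕ) / s),
          ((c j : ℝ))⁻¹ = ((c i : ℝ))⁻¹ := by
        intro j hj
        have hj' := (Finset.mem_filter.mp hj).2
        have : c j = c i := by
          simp only [hc]
          congr 1
          exact Finset.filter_congr (fun j' _ => by rw [← hj'])
        rw [this]
      rw [Finset.sum_congr rfl hcj, Finset.sum_const]
      have hcd : (S.filter (fun j : Fin k => (i : ℕ) / s = (j : ℕ) / s)).card = c i := rfl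
      rw [hcd]
      by_cases h0 : c i = 0
      · simp [h0]
      · rw [nsmul_eq_mul, mul_inv_cancel₀ (by exact_mod_cast h0)]
        simp [h0]
    have hsum : ∑ i, (A.mulVec x₀ i - 1) ^ 2
        = ((Finset.univ.filter (fun i : Fin k => c i = 0)).card : ℝ) := by
      rw [Finset.sum_congr rfl (fun i _ => by rw [hmul i])]
      have he : ∀ i : Fin k, ((if c i = 0 then (0 : ℝ) else 1) - 1) ^ 2
          = if c i = 0 then (1 : ℝ) else 0 := by
        intro i; by_cases h : c i = 0 <;> simp [h]
      rw [Finset.sum_congr rfl (fun i _ => he i), Finset.sum_boole]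
    have hsub : S ⊆ Finset.univ.filter (fun i : Fin k => ¬ c i = 0) := by
      intro j hj
      simp only [Finset.mem_filter, Finset.mem_univ, true_and]
      intro h0
      have hmem : j ∈ S.filter (fun j' : Fin k => (j : ℕ) / s = (j' : ℕ) / s) :=
        Finset.mem_filter.mpr ⟨hj, rfl⟩
      rw [Finset.card_eq_zero.mp h0] at hmem
      exact absurd hmem (Finset.notMem_empty j)
    have hle : r ≤ (Finset.univ.filter (fun i : Fin k => ¬ c i = 0)).card := by
      rw [← hcard]; exact Finset.card_le_card hsub
    have hkk : (Finset.univ.filter (fun i : Fin k => c i = 0)).card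
        + (Finset.univ.filter (fun i : Fin k => ¬ c i = 0)).card = k := by
      rw [Finset.card_filter_add_card_filter_not]
      simp
    have hbdd : BddBelow (Set.range fun x : {x : Fin k // x ∈ S} → ℝ =>
        ∑ i, (A.mulVec x i - 1) ^ 2) := by
      refine ⟨0, ?_⟩; rintro y ⟨x, rfl⟩; positivity
    have h1 : decErr A ≤ ∑ i, (A.mulVec x₀ i - 1) ^ 2 := ciInf_le hbdd x₀
    rw [hsum] at h1
    refine h1.trans ?_
    have hck : ((Finset.univ.filter (fun i : Fin k => c i = 0)).card : ℝ)
        + ((Finset.univ.filter (fun i : Fin k => ¬ c i = 0)).card : ℝ) = (k : ℝ) := by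
      exact_mod_cast congrArg (Nat.cast : ℕ → ℝ) hkk
    have hle' : (r : ℝ) ≤ ((Finset.univ.filter (fun i : Fin k => ¬ c i = 0)).card : ℝ) := by
      exact_mod_cast hle
    linarith
  refine ⟨hub, ?_⟩
  set S : Finset (Fin k) := (Finset.univ : Finset (Fin r)).map (Fin.castLEEmb hrk) with hSdef
  have hmemS : ∀ i : Fin k, i ∈ S ↔ (i : ℕ) < r := by
    intro i
    simp only [hSdef, Finset.mem_map, Finset.mem_univ, true_and]
    constructor
    · rintro ⟨j, rfl⟩; exact j.2
    · intro hi; exact ⟨⟨(i : ℕ), hi⟩, by ext; simp⟩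
  have hScard : S.card = r := by simp [hSdef]
  have hS : S ∈ (Finset.univ : Finset (Fin k)).powersetCard r :=
    Finset.mem_powersetCard.mpr ⟨Finset.subset_univ S, hScard⟩
  refine ⟨S, hS, le_antisymm (hub S hS) ?_⟩
  set A : Matrix (Fin k) {x : Fin k // x ∈ S} ℝ := fun i j => G i j.1 with hA
  have hcardT : (Finset.univ.filter (fun i : Fin k => r ≤ (i : ℕ))).card = k - r := by
    have h := Finset.card_filter_add_card_filter_not
      (s := (Finset.univ : Finset (Fin k))) (p := fun i : Fin k => r ≤ (i : ℕ))
    have h2 : Finset.univ.filter (fun i : Fin k => ¬ r ≤ (i : ℕ)) = S := by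
      ext i; simp [hmemS i, Nat.not_le]
    rw [h2, hScard] at h
    simp only [Finset.card_univ, Fintype.card_fin] at h
    omega
  refine le_ciInf (fun x => ?_)
  have hzero : ∀ i : Fin k, r ≤ (i : ℕ) → A.mulVec x i = 0 := by
    intro i hi
    simp only [Matrix.mulVec, dotProduct, hA]
    apply Finset.sum_eq_zero
    intro j _
    have hj : (j.1 : ℕ) < r := (hmemS j.1).mp j.2
    have h1 : (j.1 : ℕ) / s < r / s := Nat.div_lt_div_of_lt_of_dvd hdr hj
    have h2 : r / s ≤ (i : ℕ) / s := Nat.div_le_div_right hi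
    have hne : ¬ ((i : ℕ) / s = (j.1 : ℕ) / s) := by omega
    rw [hG]
    simp [hne]
  have hone : ∀ i ∈ Finset.univ.filter (fun i : Fin k => r ≤ (i : ℕ)),
      (A.mulVec x i - 1) ^ 2 = 1 := by
    intro i hi
    rw [hzero i (Finset.mem_filter.mp hi).2]
    norm_num
  calc (k : ℝ) - r = ((Finset.univ.filter (fun i : Fin k => r ≤ (i : ℕ))).card : ℝ) := by
        rw [hcardT, Nat.cast_sub hrk]
    _ = ∑ i ∈ Finset.univ.filter (fun i : Fin k => r ≤ (i : ℕ)), (A.mulVec x i - 1) ^ 2 := by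
        rw [Finset.sum_congr rfl hone, Finset.sum_const, nsmul_eq_mul, mul_one]
    _ ≤ ∑ i, (A.mulVec x i - 1) ^ 2 :=
        Finset.sum_le_sum_of_subset_of_nonneg (Finset.filter_subset _ _)
          (fun i _ _ => by positivity)
end
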